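/- The trigamma function at 1/4 satisfies ψ'(1/4) = π² + 8G, where G is Catalan's constant. -/

import Mathlib

open Real

/-- The digamma function `ψ(x) = Γ'(x)/Γ(x)`. -/
noncomputable def digamma (x : ℝ) : ℝ := deriv Real.Gamma x / Real.Gamma x

/-- Catalan's constant `G = ∑ (-1)ⁿ/(2n+1)²`. -/
noncomputable def catalanConstant : ℝ := ∑' n : ℕ, (-1 : ℝ)^n / (2*n+1)^2

open Filter Topology


lemma summable_inv_sq_shift (c : ℝ) (hc : 0 < c) :
    Summable (fun m : ℕ => 1 / (c + m)^2) := by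
  have h0 := Real.summable_one_div_nat_pow.mpr (le_refl 2)
  have h1 : Summable (fun m : ℕ => 1 / ((1+m:ℕ):ℝ)^2) :=
    h0.comp_injective (add_right_injective 1)
  set d := min c 1 with hd
  have hd0 : 0 < d := lt_min hc one_pos
  apply ((h1.mul_left (1/d^2))).of_nonneg_of_le (fun m => by positivity)
  intro m
  have hdm : d * (1+m) ≤ c + m := by
    have h2 : d ≤ c := min_le_left _ _
    have h3 : d ≤ 1 := min_le_right _ _
    have h4 : (0:ℝ) ≤ m := Nat.cast_nonneg m
    nlinarith
  have hcm : (0:ℝ) < c + m := by positivity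
  have h5 : (0:ℝ) < 1 + (m:ℝ) := by positivity
  rw [div_mul_div_comm, one_mul]
  rw [div_le_div_iff₀ (by positivity) (by push_cast; positivity)]
  push_cast
  nlinarith [mul_nonneg (sub_nonneg.mpr hdm) (by positivity : (0:ℝ) ≤ c + m + d * (1 + m)), mul_nonneg hd0.le h5.le]

lemma sum_odd_inv_sq' : ∑' k : ℕ, 1 / (2*(k:ℝ)+1)^2 = π^2/8 := by
  have hZ : HasSum (fun n : ℕ => (1:ℝ)/(n:ℝ)^2) (π^2/6) := hasSum_zeta_two
  have hsum := hZ.summable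
  have hinj : Function.Injective (fun k : ℕ => 2*k) := fun a b hab => by simp only [] at hab; omega
  have hinj' : Function.Injective (fun k : ℕ => 2*k+1) := fun a b hab => by simp only [] at hab; omega
  have he : Summable (fun k : ℕ => (1:ℝ)/((2*k : ℕ):ℝ)^2) := hsum.comp_injective hinj
  have ho : Summable (fun k : ℕ => (1:ℝ)/((2*k+1 : ℕ):ℝ)^2) := hsum.comp_injective hinj'
  have hsplit := tsum_even_add_odd (f := fun n : ℕ => (1:ℝ)/(n:ℝ)^2) he ho
  have heval : ∑' k : ℕ, (1:ℝ)/((2*k : ℕ):ℝ)^2 = (1/4) * (π^2/6) := by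
    rw [← hZ.tsum_eq, ← tsum_mul_left]
    congr 1; funext k
    rcases Nat.eq_zero_or_pos k with rfl | hk
    · simp
    · have hk' : ((k:ℝ)) ≠ 0 := Nat.cast_ne_zero.mpr hk.ne'
      push_cast
      field_simp
      ring
  rw [heval, hZ.tsum_eq] at hsplit
  have hcast : ∑' k : ℕ, (1:ℝ)/((2*k+1 : ℕ):ℝ)^2 = ∑' k : ℕ, 1 / (2*(k:ℝ)+1)^2 := by
    congr 1; funext k; push_cast; ring_nf
  rw [hcast] at hsplit
  linarith

lemma sqs (c : ℝ) (hc : 0 < c) : Summable (fun m : ℕ => 1 / (c + m)^2) := summable_inv_sq_shift c hc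
lemma soi : ∑' k : ℕ, 1 / (2*(k:ℝ)+1)^2 = π^2/8 := sum_odd_inv_sq'

lemma summable_q1 : Summable (fun k : ℕ => 1 / (4*(k:ℝ)+1)^2) := by
  have h := (sqs (1/4) (by norm_num)).mul_left (1/16)
  apply h.congr
  intro k
  have : ((1:ℝ)/4 + k) ≠ 0 := by positivity
  field_simp; ring

lemma summable_q3 : Summable (fun k : ℕ => 1 / (4*(k:ℝ)+3)^2) := by
  have h := (sqs (3/4) (by norm_num)).mul_left (1/16)
  apply h.congr
  intro k
  have : ((3:ℝ)/4 + k) ≠ 0 := by positivity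
  field_simp; ring

lemma odd_split : (∑' k : ℕ, 1 / (4*(k:ℝ)+1)^2) + (∑' k : ℕ, 1 / (4*(k:ℝ)+3)^2) = π^2/8 := by
  rw [← soi]
  set f : ℕ → ℝ := fun n => 1 / (2*(n:ℝ)+1)^2 with hf
  have he : Summable (fun k : ℕ => f (2*k)) := by
    apply summable_q1.congr; intro k; simp only [hf]; push_cast; ring_nf
  have ho : Summable (fun k : ℕ => f (2*k+1)) := by
    apply summable_q3.congr; intro k; simp only [hf]; push_cast; ring_nf
  have h := tsum_even_add_odd (f := f) he ho
  rw [← h]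
  congr 1
  · apply tsum_congr; intro k; simp only [hf]; push_cast; ring_nf
  · apply tsum_congr; intro k; simp only [hf]; push_cast; ring_nf

lemma catalan_split : catalanConstant
    = (∑' k : ℕ, 1 / (4*(k:ℝ)+1)^2) - (∑' k : ℕ, 1 / (4*(k:ℝ)+3)^2) := by
  rw [catalanConstant]
  set g : ℕ → ℝ := fun n => (-1:ℝ)^n / (2*(n:ℝ)+1)^2 with hg
  have he : Summable (fun k : ℕ => g (2*k)) := by
    apply summable_q1.congr; intro k
    simp only [hg, pow_mul, neg_one_sq, one_pow]; push_cast; ring_nf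
  have ho : Summable (fun k : ℕ => g (2*k+1)) := by
    apply summable_q3.neg.congr; intro k
    simp only [hg, pow_succ, pow_mul, neg_one_sq, one_pow, one_mul]; push_cast; ring_nf
  have h := tsum_even_add_odd (f := g) he ho
  rw [← h]
  have h1 : ∑' k : ℕ, g (2*k) = ∑' k : ℕ, 1 / (4*(k:ℝ)+1)^2 := by
    apply tsum_congr; intro k
    simp only [hg, pow_mul, neg_one_sq, one_pow]; push_cast; ring_nf
  have h2 : ∑' k : ℕ, g (2*k+1) = -∑' k : ℕ, 1 / (4*(k:ℝ)+3)^2 := by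
    rw [← tsum_neg]
    apply tsum_congr; intro k
    simp only [hg, pow_succ, pow_mul, neg_one_sq, one_pow, one_mul]; push_cast; ring_nf
  rw [h1, h2]; ring

noncomputable def psiFun (x : ℝ) : ℝ :=
  -Real.eulerMascheroniConstant + ∑' m : ℕ, (1/((m:ℝ)+1) - 1/(x+m))

lemma term_eq {x : ℝ} (hx : 0 < x) (m : ℕ) :
    1/((m:ℝ)+1) - 1/(x+m) = (x-1)/(((m:ℝ)+1)*(x+m)) := by
  have h1 : ((m:ℝ)+1) ≠ 0 := by positivity
  have h2 : (x+(m:ℝ)) ≠ 0 := by positivity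
  field_simp
  ring

lemma term_bound {x : ℝ} (hx : x ∈ Set.Ioo (1/8:ℝ) (1/2)) (m : ℕ) :
    ‖1/((m:ℝ)+1) - 1/(x+m)‖ ≤ 8/((m:ℝ)+1)^2 := by
  obtain ⟨hx1, hx2⟩ := hx
  have hx0 : (0:ℝ) < x := by linarith
  have hm1 : (0:ℝ) < (m:ℝ)+1 := by positivity
  have hxm : (0:ℝ) < x + m := by positivity
  rw [term_eq hx0, Real.norm_eq_abs, abs_div, abs_of_pos (by positivity : (0:ℝ) < ((m:ℝ)+1)*(x+m))]
  have h1 : |x - 1| ≤ 1 := by rw [abs_le]; constructor <;> linarith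
  have h2 : ((m:ℝ)+1)^2/8 ≤ ((m:ℝ)+1)*(x+m) := by nlinarith [Nat.cast_nonneg (α := ℝ) m]
  have h3 : (0:ℝ) < ((m:ℝ)+1)^2/8 := by positivity
  calc |x-1| / (((m:ℝ)+1)*(x+m)) ≤ 1 / (((m:ℝ)+1)^2/8) :=
        div_le_div₀ (by norm_num) h1 h3 h2
    _ = 8/((m:ℝ)+1)^2 := by field_simp

lemma sq_term_bound {x : ℝ} (hx : x ∈ Set.Ioo (1/8:ℝ) (1/2)) (m : ℕ) :
    ‖1/(x+(m:ℝ))^2‖ ≤ 64/((m:ℝ)+1)^2 := by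
  obtain ⟨hx1, hx2⟩ := hx
  have hx0 : (0:ℝ) < x := by linarith
  have hm0 : (0:ℝ) ≤ m := Nat.cast_nonneg m
  have hxm : (0:ℝ) < x + m := by positivity
  rw [Real.norm_eq_abs, abs_of_pos (by positivity)]
  rw [div_le_div_iff₀ (by positivity) (by positivity)]
  nlinarith [sq_nonneg ((m:ℝ) - 1)]

lemma summable_base : Summable (fun m : ℕ => 1/((m:ℝ)+1)^2) := by
  have h0 := Real.summable_one_div_nat_pow.mpr (le_refl 2)
  have := h0.comp_injective (add_right_injective 1)
  apply this.congr
  intro m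
  simp [Function.comp, add_comm]

lemma summable_psi_terms {x : ℝ} (hx : x ∈ Set.Ioo (1/8:ℝ) (1/2)) :
    Summable (fun m : ℕ => 1/((m:ℝ)+1) - 1/(x+m)) :=
  Summable.of_norm_bounded ((summable_base.mul_left 8).congr (fun m => by ring))
    (term_bound hx)

lemma summable_sq_terms {x : ℝ} (hx : x ∈ Set.Ioo (1/8:ℝ) (1/2)) :
    Summable (fun m : ℕ => 1/(x+(m:ℝ))^2) :=
  Summable.of_norm_bounded ((summable_base.mul_left 64).congr (fun m => by ring))
    (sq_term_bound hx)

lemma unif_sq : TendstoUniformlyOn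
    (fun (n : ℕ) (x : ℝ) => ∑ m ∈ Finset.range (n+1), 1/(x+(m:ℝ))^2)
    (fun x => ∑' m : ℕ, 1/(x+(m:ℝ))^2) atTop (Set.Ioo (1/8:ℝ) (1/2)) := by
  have h := tendstoUniformlyOn_tsum_nat (f := fun (m : ℕ) (x : ℝ) => 1/(x+(m:ℝ))^2)
    ((summable_base.mul_left 64).congr (fun m => by ring))
    (fun m x hx => sq_term_bound hx m)
  intro u hu
  exact (tendsto_add_atTop_nat 1).eventually (h u hu)

lemma unif_psi_series : TendstoUniformlyOn
    (fun (n : ℕ) (x : ℝ) => ∑ m ∈ Finset.range (n+1), (1/((m:ℝ)+1) - 1/(x+m)))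
    (fun x => ∑' m : ℕ, (1/((m:ℝ)+1) - 1/(x+m))) atTop (Set.Ioo (1/8:ℝ) (1/2)) := by
  have h := tendstoUniformlyOn_tsum_nat (f := fun (m : ℕ) (x : ℝ) => 1/((m:ℝ)+1) - 1/(x+m))
    ((summable_base.mul_left 8).congr (fun m => by ring))
    (fun m x hx => term_bound hx m)
  intro u hu
  exact (tendsto_add_atTop_nat 1).eventually (h u hu)

lemma tendsto_log_sub_harmonic :
    Tendsto (fun n : ℕ => Real.log n - (harmonic (n+1) : ℝ)) atTop
      (𝓝 (-Real.eulerMascheroniConstant)) := by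
  have h1 : Tendsto (fun n : ℕ => (harmonic (n+1) : ℝ) - Real.log (n+1)) atTop
      (𝓝 Real.eulerMascheroniConstant) := by
    have := Real.tendsto_harmonic_sub_log.comp (tendsto_add_atTop_nat 1)
    apply this.congr
    intro n
    simp [Function.comp]
  have h2 := Real.tendsto_log_nat_add_one_sub_log
  have h3 := h1.add h2
  rw [add_zero] at h3
  apply (h3.neg).congr
  intro n
  ring

lemma partialSum_tendsto {x : ℝ} (hx : x ∈ Set.Ioo (1/8:ℝ) (1/2)) :
    Tendsto (fun n : ℕ => ∑ m ∈ Finset.range (n+1), (1/((m:ℝ)+1) - 1/(x+m))) atTop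
      (𝓝 (∑' m : ℕ, (1/((m:ℝ)+1) - 1/(x+m)))) :=
  ((summable_psi_terms hx).hasSum.tendsto_sum_nat).comp (tendsto_add_atTop_nat 1)

lemma harmonic_cast (n : ℕ) :
    (harmonic (n+1) : ℝ) = ∑ m ∈ Finset.range (n+1), 1/((m:ℝ)+1) := by
  rw [harmonic]
  push_cast
  apply Finset.sum_congr rfl
  intro m _
  rw [one_div]

lemma hasDerivAt_inner (n : ℕ) {x : ℝ} (hx : x ∈ Set.Ioo (1/8:ℝ) (1/2)) :
    HasDerivAt (fun y : ℝ => Real.log n - ∑ m ∈ Finset.range (n+1), 1/(y+(m:ℝ)))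
      (∑ m ∈ Finset.range (n+1), 1/(x+(m:ℝ))^2) x := by
  have hx0 : (0:ℝ) < x := by linarith [hx.1]
  have h : HasDerivAt (fun y : ℝ => ∑ m ∈ Finset.range (n+1), 1/(y+(m:ℝ)))
      (∑ m ∈ Finset.range (n+1), -(1/(x+(m:ℝ))^2)) x := by
    apply HasDerivAt.fun_sum
    intro m _
    have hxm : x + (m:ℝ) ≠ 0 := by positivity
    have h := ((hasDerivAt_id x).add_const (m:ℝ)).inv hxm
    simpa [one_div, neg_div, Pi.inv_def] using h
  have h2 := h.const_sub (Real.log n)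
  simpa using h2

lemma hasDerivAt_psiFun {x : ℝ} (hx : x ∈ Set.Ioo (1/8:ℝ) (1/2)) :
    HasDerivAt psiFun (∑' m : ℕ, 1/(x+(m:ℝ))^2) x := by
  apply hasDerivAt_of_tendstoUniformlyOn isOpen_Ioo unif_sq
    (f := fun (n : ℕ) (y : ℝ) => Real.log n - ∑ m ∈ Finset.range (n+1), 1/(y+(m:ℝ)))
  · exact Eventually.of_forall (fun n y hy => hasDerivAt_inner n hy)
  · intro y hy
    have hc := tendsto_log_sub_harmonic
    have hp := partialSum_tendsto hy
    have := hc.add hp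
    apply this.congr
    intro n
    rw [harmonic_cast, Finset.sum_sub_distrib]
    ring
  · exact hx

lemma hasDerivAt_logGammaSeq (n : ℕ) {x : ℝ} (hx : x ∈ Set.Ioo (1/8:ℝ) (1/2)) :
    HasDerivAt (fun y : ℝ => Real.BohrMollerup.logGammaSeq y n)
      (Real.log n - ∑ m ∈ Finset.range (n+1), 1/(x+(m:ℝ))) x := by
  have hx0 : (0:ℝ) < x := by linarith [hx.1]
  have h1 : HasDerivAt (fun y : ℝ => ∑ m ∈ Finset.range (n+1), Real.log (y+(m:ℝ)))
      (∑ m ∈ Finset.range (n+1), 1/(x+(m:ℝ))) x := by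
    apply HasDerivAt.fun_sum
    intro m _
    have hxm : x + (m:ℝ) ≠ 0 := by positivity
    have h := ((hasDerivAt_id x).add_const (m:ℝ)).log hxm
    simpa [one_div] using h
  have h2 : HasDerivAt (fun y : ℝ => y * Real.log n + Real.log (Nat.factorial n))
      (Real.log n) x := by
    simpa using ((hasDerivAt_id x).mul_const (Real.log n)).add_const (Real.log (Nat.factorial n))
  have h3 := h2.sub h1
  apply h3.congr_of_eventuallyEq
  apply Eventually.of_forall
  intro y
  simp only [Real.BohrMollerup.logGammaSeq, Pi.sub_apply]

lemma unif_deriv_seq : TendstoUniformlyOn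
    (fun (n : ℕ) (y : ℝ) => Real.log n - ∑ m ∈ Finset.range (n+1), 1/(y+(m:ℝ)))
    psiFun atTop (Set.Ioo (1/8:ℝ) (1/2)) := by
  have hconst : TendstoUniformlyOn
      (fun (n : ℕ) (_ : ℝ) => Real.log n - (harmonic (n+1) : ℝ))
      (fun _ => -Real.eulerMascheroniConstant) atTop (Set.Ioo (1/8:ℝ) (1/2)) :=
    tendsto_log_sub_harmonic.tendstoUniformlyOn_const _
  have h := hconst.add unif_psi_series
  apply (h.congr ?_).congr_right ?_
  · apply Eventually.of_forall
    intro n y _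
    simp only [Pi.add_apply]
    rw [harmonic_cast, Finset.sum_sub_distrib]
    ring
  · intro y _
    rfl

lemma hasDerivAt_logGamma {x : ℝ} (hx : x ∈ Set.Ioo (1/8:ℝ) (1/2)) :
    HasDerivAt (fun y => Real.log (Real.Gamma y)) (psiFun x) x := by
  apply hasDerivAt_of_tendstoUniformlyOn isOpen_Ioo unif_deriv_seq
    (f := fun (n : ℕ) (y : ℝ) => Real.BohrMollerup.logGammaSeq y n)
  · exact Eventually.of_forall (fun n y hy => hasDerivAt_logGammaSeq n hy)
  · intro y hy
    exact Real.BohrMollerup.tendsto_log_gamma (by linarith [hy.1] : (0:ℝ) < y)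
  · exact hx


lemma digamma_eq_psiFun {x : ℝ} (hx : x ∈ Set.Ioo (1/8:ℝ) (1/2)) :
    digamma x = psiFun x := by
  have hx0 : (0:ℝ) < x := by linarith [hx.1]
  have hΓ : DifferentiableAt ℝ Real.Gamma x :=
    Real.differentiableAt_Gamma (fun m => by
      have : (0:ℝ) ≤ m := Nat.cast_nonneg m
      intro h; rw [h] at hx0; linarith)
  have hΓpos := Real.Gamma_pos_of_pos hx0
  have h1 : HasDerivAt (fun y => Real.log (Real.Gamma y)) (deriv Real.Gamma x / Real.Gamma x) x :=
    hΓ.hasDerivAt.log hΓpos.ne'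
  exact h1.unique (hasDerivAt_logGamma hx)

lemma eval_quarter : (∑' m : ℕ, 1/((1/4:ℝ)+(m:ℝ))^2) = π^2 + 8*catalanConstant := by
  have h16 : ∑' m : ℕ, 1/((1/4:ℝ)+(m:ℝ))^2 = 16 * ∑' k : ℕ, 1/(4*(k:ℝ)+1)^2 := by
    rw [← tsum_mul_left]
    apply tsum_congr
    intro k
    have h1 : (4*(k:ℝ)+1) ≠ 0 := by positivity
    have h2 : ((1:ℝ)/4+(k:ℝ)) ≠ 0 := by positivity
    field_simp
    ring
  have hA := odd_split
  have hB := catalan_split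
  rw [h16]
  rw [hB]
  linarith

/-- `ψ'(1/4) = π² + 8G`. -/
theorem trigamma_one_quarter :
    deriv digamma (1/4) = π^2 + 8 * catalanConstant := by
  have hmem : (1/4:ℝ) ∈ Set.Ioo (1/8:ℝ) (1/2) := by constructor <;> norm_num
  have hnhds : Set.Ioo (1/8:ℝ) (1/2) ∈ 𝓝 (1/4:ℝ) := isOpen_Ioo.mem_nhds hmem
  have heq : digamma =ᶠ[𝓝 (1/4:ℝ)] psiFun :=
    eventually_of_mem hnhds (fun y hy => digamma_eq_psiFun hy)
  rw [heq.deriv_eq, (hasDerivAt_psiFun hmem).deriv, eval_quarter]
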